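/- For any r-tuple (n₁, …, n_r) of nonnegative integers and any set S, the number of words in the rearrangement class R(n₁, …, n_r) with descent set S equals the number of words in R(n₁, …, n_r) with rise set S. -/

import Mathlib

/-- Descent set: positions `i`, `1 ≤ i ≤ n-1`, with `x_i > x_{i+1}`. -/
def Word.DES {X : Type*} [PartialOrder X] (w : List X) : Set ℕ :=
  {i | ∃ h : i < w.length, 0 < i ∧ w[i]'h < w[i - 1]'(by omega)}

/-- Rise set: positions `i`, `1 ≤ i ≤ n-1`, with `x_i < x_{i+1}`. -/
def Word.ASC {X : Type*} [PartialOrder X] (w : List X) : Set ℕ :=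
  {i | ∃ h : i < w.length, 0 < i ∧ w[i - 1]'(by omega) < w[i]'h}

variable {α : Type*}

theorem chain_le_forall : ∀ (s : List ℕ) (p : ℕ), List.Chain (· ≤ ·) p s → ∀ x ∈ s, p ≤ x := by
  intro s
  induction s with
  | nil => simp
  | cons a s ih =>
    intro p hc x hx
    rcases List.chain_cons.1 hc with ⟨hpa, hc'⟩
    rcases List.mem_cons.1 hx with rfl | hx
    · exact hpa
    · exact le_trans hpa (ih a hc' x hx)

/-- Split a list into blocks at the (absolute) cut positions `s`, where `p` is
the absolute position of the start of the current list. -/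
def chopAbs (p : ℕ) : List ℕ → List α → List (List α)
  | [], l => [l]
  | a :: s, l => l.take (a - p) :: chopAbs a s (l.drop (a - p))

theorem chopAbs_join (p : ℕ) : ∀ (s : List ℕ) (l : List α), (chopAbs p s l).flatten = l := by
  intro s
  induction s generalizing p with
  | nil => intro l; simp [chopAbs]
  | cons a s ih => intro l; simp [chopAbs, ih a]

theorem join_map_reverse_perm : ∀ (bs : List (List α)),
    (bs.map List.reverse).flatten.Perm bs.flatten := by
  intro bs
  induction bs with
  | nil => simp
  | cons b bs ih => simpa using ((b.reverse_perm).append ih)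

theorem chopAbs_rechop (f : List α → List α) (hf : ∀ b, (f b).length = b.length) :
    ∀ (s : List ℕ) (p : ℕ) (l : List α), List.Chain (· ≤ ·) p s →
      (∀ x ∈ s, x ≤ p + l.length) →
      chopAbs p s (((chopAbs p s l).map f).flatten) = (chopAbs p s l).map f := by
  intro s
  induction s with
  | nil => intro p l _ _; simp [chopAbs]
  | cons a s ih =>
    intro p l hc hb
    have hap : p ≤ a := (List.chain_cons.1 hc).1
    have ha : a - p ≤ l.length := by
      have := hb a (by simp); omega
    have hlen : (f (l.take (a - p))).length = a - p := by
      rw [hf]; simp [ha]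
    simp only [chopAbs, List.map_cons, List.flatten_cons]
    rw [List.take_append_of_le_length (by omega), List.take_of_length_le (by omega),
      List.drop_append_of_le_length (by omega), List.drop_of_length_le (by omega), List.nil_append]
    refine congrArg _ ?_
    refine ih a (l.drop (a - p)) (List.chain_cons.1 hc).2 ?_
    intro x hx
    have hax : a ≤ x := chain_le_forall s a (List.chain_cons.1 hc).2 x hx
    have := hb x (by simp [hx])
    simp only [List.length_drop]
    omega

theorem chopAbs_chain'_iff (R : α → α → Prop) :
    ∀ (s : List ℕ) (p : ℕ) (l : List α), List.Chain (· ≤ ·) p s →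
      ((∀ b ∈ chopAbs p s l, b.Chain' R) ↔
        ∀ j (h : j + 1 < l.length), (p + j + 1) ∉ s →
          R (l[j]'(by omega)) (l[j+1]'h)) := by
  intro s
  induction s with
  | nil =>
    intro p l _
    simp only [chopAbs, List.mem_singleton, forall_eq, List.not_mem_nil, not_false_iff,
      forall_true_left]
    rw [List.Chain', List.isChain_iff_getElem]
  | cons a s ih =>
    intro p l hc
    have hap : p ≤ a := (List.chain_cons.1 hc).1
    have hs_ge : ∀ x ∈ s, a ≤ x := chain_le_forall s a (List.chain_cons.1 hc).2
    set d := a - p with hd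
    have hpd : p + d = a := by omega
    simp only [chopAbs, List.mem_cons, forall_eq_or_imp]
    rw [ih a (l.drop d) (List.chain_cons.1 hc).2]
    constructor
    · rintro ⟨h1, h2⟩ j hj hmem
      simp only [List.mem_cons, not_or] at hmem
      obtain ⟨hne, hns⟩ := hmem
      rcases lt_trichotomy (j + 1) d with hlt | heq | hgt
      · rw [List.Chain', List.isChain_iff_getElem] at h1
        have := h1 j (by simp [List.length_take]; omega)
        simpa using this
      · exact absurd (by omega) hne
      · have hj' : (j - d) + 1 < (l.drop d).length := by
          simp [List.length_drop]; omega
        have := h2 (j - d) hj' (by rw [show a + (j - d) + 1 = p + j + 1 by omega]; exact hns)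
        simp only [List.getElem_drop] at this
        convert this using 2 <;> omega
    · intro h
      constructor
      · rw [List.Chain', List.isChain_iff_getElem]
        intro i hi
        simp only [List.length_take] at hi
        have hi2 : i + 1 < l.length := by omega
        have hi3 : i + 1 < d := by omega
        have := h i hi2 (by
          simp only [List.mem_cons, not_or]
          refine ⟨by omega, fun hx => ?_⟩
          have := hs_ge _ hx; omega)
        simpa using this
      · intro j' hj' hns'
        have hjl : d + j' + 1 < l.length := by
          simp [List.length_drop] at hj'; omega
        have := h (d + j') hjl (by
          simp only [List.mem_cons, not_or]
          refine ⟨by omega, by rwa [show p + (d + j') + 1 = a + j' + 1 by omega]⟩)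
        simp only [List.getElem_drop]
        convert this using 2 <;> omega

variable {r : ℕ}

theorem length_of_counts (nn : Fin r → ℕ) (w : List (Fin r)) (h : ∀ j, w.count j = nn j) :
    w.length = ∑ j, nn j := by
  have h1 : ∑ j, w.count j = w.length := by
    have h2 : ∑ j : Fin r, Multiset.count j (↑w : Multiset (Fin r)) =
        Multiset.card (↑w : Multiset (Fin r)) := by
      rw [← Multiset.toFinset_sum_count_eq (↑w : Multiset (Fin r))]
      refine (Finset.sum_subset (Finset.subset_univ _) ?_).symm
      intro x _ hx
      exact Multiset.count_eq_zero_of_notMem (by simpa using hx)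
    simpa using h2
  rw [← h1]
  exact Finset.sum_congr rfl fun j _ => h j

theorem words_finite (nn : Fin r → ℕ) :
    {w : List (Fin r) | ∀ j, w.count j = nn j}.Finite :=
  (List.finite_length_eq (Fin r) (∑ j, nn j)).subset fun w hw => length_of_counts nn w hw

theorem DES_subset_iff {X : Type*} [LinearOrder X] (w : List X) (A : Set ℕ) :
    Word.DES w ⊆ A ↔
      ∀ j (h : j + 1 < w.length), (j + 1 : ℕ) ∉ A → w[j]'(by omega) ≤ w[j+1]'h := by
  constructor
  · intro hsub j h hj
    by_contra hlt
    exact hj (hsub ⟨h, Nat.succ_pos j, by simpa using lt_of_not_ge hlt⟩)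
  · rintro h i ⟨hi, hi0, hlt⟩
    by_contra hiA
    obtain ⟨j, rfl⟩ : ∃ j, i = j + 1 := ⟨i - 1, by omega⟩
    exact absurd hlt (not_lt.2 (by simpa using h j hi hiA))

theorem ASC_subset_iff {X : Type*} [LinearOrder X] (w : List X) (A : Set ℕ) :
    Word.ASC w ⊆ A ↔
      ∀ j (h : j + 1 < w.length), (j + 1 : ℕ) ∉ A → w[j+1]'h ≤ w[j]'(by omega) := by
  constructor
  · intro hsub j h hj
    by_contra hlt
    exact hj (hsub ⟨h, Nat.succ_pos j, by simpa using lt_of_not_ge hlt⟩)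
  · rintro h i ⟨hi, hi0, hlt⟩
    by_contra hiA
    obtain ⟨j, rfl⟩ : ∃ j, i = j + 1 := ⟨i - 1, by omega⟩
    exact absurd hlt (not_lt.2 (by simpa using h j hi hiA))

/-- Reverse each block of `w`, with blocks cut at positions in `s`. -/
def phi (s : List ℕ) (w : List α) : List α := ((chopAbs 0 s w).map List.reverse).flatten

theorem phi_perm (s : List ℕ) (w : List α) : (phi s w).Perm w := by
  have := join_map_reverse_perm (chopAbs 0 s w)
  rwa [chopAbs_join] at this

theorem chain_zero_sort (T : Finset ℕ) : List.Chain (· ≤ ·) 0 (T.sort (· ≤ ·)) := by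
  rw [List.Chain, List.isChain_iff_pairwise, List.pairwise_cons]
  exact ⟨fun x _ => Nat.zero_le x, T.pairwise_sort (· ≤ ·)⟩

theorem chopAbs_phi (T : Finset ℕ) (w : List α) (hb : ∀ x ∈ T, x ≤ w.length) :
    chopAbs 0 (T.sort (· ≤ ·)) (phi (T.sort (· ≤ ·)) w)
      = (chopAbs 0 (T.sort (· ≤ ·)) w).map List.reverse := by
  exact chopAbs_rechop List.reverse (fun b => b.length_reverse) _ 0 w (chain_zero_sort T)
    (fun x hx => by simpa using hb x ((Finset.mem_sort _).1 hx))

theorem phi_phi (T : Finset ℕ) (w : List α) (hb : ∀ x ∈ T, x ≤ w.length) :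
    phi (T.sort (· ≤ ·)) (phi (T.sort (· ≤ ·)) w) = w := by
  unfold phi
  rw [show ((chopAbs 0 (T.sort (· ≤ ·)) w).map List.reverse).flatten
      = phi (T.sort (· ≤ ·)) w from rfl, chopAbs_phi T w hb, List.map_map]
  simp only [Function.comp_def, List.reverse_reverse, List.map_id']
  exact chopAbs_join 0 _ w

theorem blocksD_iff {X : Type*} [LinearOrder X] (T : Finset ℕ) (w : List X) :
    (∀ b ∈ chopAbs 0 (T.sort (· ≤ ·)) w, b.Chain' (· ≤ ·)) ↔ Word.DES w ⊆ ↑T := by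
  rw [DES_subset_iff, chopAbs_chain'_iff (· ≤ ·) (T.sort (· ≤ ·)) 0 w (chain_zero_sort T)]
  simp [Finset.mem_sort]

theorem blocksA_iff {X : Type*} [LinearOrder X] (T : Finset ℕ) (w : List X) :
    (∀ b ∈ chopAbs 0 (T.sort (· ≤ ·)) w, b.Chain' (fun a b => b ≤ a)) ↔ Word.ASC w ⊆ ↑T := by
  rw [ASC_subset_iff, chopAbs_chain'_iff (fun a b => b ≤ a) (T.sort (· ≤ ·)) 0 w
    (chain_zero_sort T)]
  simp [Finset.mem_sort]

theorem asc_phi {X : Type*} [LinearOrder X] (T : Finset ℕ) (w : List X)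
    (hb : ∀ x ∈ T, x ≤ w.length) (hD : Word.DES w ⊆ ↑T) :
    Word.ASC (phi (T.sort (· ≤ ·)) w) ⊆ ↑T := by
  rw [← blocksA_iff, chopAbs_phi T w hb]
  intro b hbm
  obtain ⟨b', hmem, rfl⟩ := List.mem_map.1 hbm
  rw [List.Chain', List.isChain_reverse]
  exact ((blocksD_iff T w).2 hD) b' hmem

theorem des_phi {X : Type*} [LinearOrder X] (T : Finset ℕ) (w : List X)
    (hb : ∀ x ∈ T, x ≤ w.length) (hA : Word.ASC w ⊆ ↑T) :
    Word.DES (phi (T.sort (· ≤ ·)) w) ⊆ ↑T := by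
  rw [← blocksD_iff, chopAbs_phi T w hb]
  intro b hbm
  obtain ⟨b', hmem, rfl⟩ := List.mem_map.1 hbm
  rw [List.Chain', List.isChain_reverse]
  exact ((blocksA_iff T w).2 hA) b' hmem

open Classical in
/-- The rearrangement class as a finset. -/
noncomputable def WF (nn : Fin r → ℕ) : Finset (List (Fin r)) := (words_finite nn).toFinset

theorem mem_WF (nn : Fin r → ℕ) (w : List (Fin r)) : w ∈ WF nn ↔ ∀ j, w.count j = nn j := by
  simp [WF, Set.Finite.mem_toFinset]

open Classical in
noncomputable def cntD (nn : Fin r → ℕ) (T : Finset ℕ) : ℕ :=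
  ((WF nn).filter fun w => Word.DES w = ↑T).card

open Classical in
noncomputable def cntA (nn : Fin r → ℕ) (T : Finset ℕ) : ℕ :=
  ((WF nn).filter fun w => Word.ASC w = ↑T).card

open Classical in
noncomputable def cumD (nn : Fin r → ℕ) (T : Finset ℕ) : ℕ :=
  ((WF nn).filter fun w => Word.DES w ⊆ ↑T).card

open Classical in
noncomputable def cumA (nn : Fin r → ℕ) (T : Finset ℕ) : ℕ :=
  ((WF nn).filter fun w => Word.ASC w ⊆ ↑T).card

open Classical in
theorem cumD_eq_sum (nn : Fin r → ℕ) (T : Finset ℕ) :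
    cumD nn T = ∑ T' ∈ T.powerset, cntD nn T' := by
  classical
  rw [cumD, show ((WF nn).filter fun w => Word.DES w ⊆ ↑T)
      = T.powerset.biUnion (fun T' => (WF nn).filter fun w => Word.DES w = ↑T') from ?_,
    Finset.card_biUnion ?_]
  · simp [cntD]
  · intro T₁ h₁ T₂ h₂ hne
    rw [Function.onFun, Finset.disjoint_left]
    intro w hw₁ hw₂
    simp only [Finset.mem_filter] at hw₁ hw₂
    exact hne (Finset.coe_injective (hw₁.2 ▸ hw₂.2))
  · ext w
    simp only [Finset.mem_filter, Finset.mem_biUnion, Finset.mem_powerset]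
    constructor
    · rintro ⟨hw, hsub⟩
      refine ⟨T.filter (· ∈ Word.DES w), Finset.filter_subset _ _, hw, ?_⟩
      rw [Finset.coe_filter]
      exact Set.ext fun i => ⟨fun h => ⟨hsub h, h⟩, fun h => h.2⟩
    · rintro ⟨T', hT', hw, heq⟩
      exact ⟨hw, heq ▸ Finset.coe_subset.2 hT'⟩

open Classical in
theorem cumA_eq_sum (nn : Fin r → ℕ) (T : Finset ℕ) :
    cumA nn T = ∑ T' ∈ T.powerset, cntA nn T' := by
  classical
  rw [cumA, show ((WF nn).filter fun w => Word.ASC w ⊆ ↑T)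
      = T.powerset.biUnion (fun T' => (WF nn).filter fun w => Word.ASC w = ↑T') from ?_,
    Finset.card_biUnion ?_]
  · simp [cntA]
  · intro T₁ h₁ T₂ h₂ hne
    rw [Function.onFun, Finset.disjoint_left]
    intro w hw₁ hw₂
    simp only [Finset.mem_filter] at hw₁ hw₂
    exact hne (Finset.coe_injective (hw₁.2 ▸ hw₂.2))
  · ext w
    simp only [Finset.mem_filter, Finset.mem_biUnion, Finset.mem_powerset]
    constructor
    · rintro ⟨hw, hsub⟩
      refine ⟨T.filter (· ∈ Word.ASC w), Finset.filter_subset _ _, hw, ?_⟩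
      rw [Finset.coe_filter]
      exact Set.ext fun i => ⟨fun h => ⟨hsub h, h⟩, fun h => h.2⟩
    · rintro ⟨T', hT', hw, heq⟩
      exact ⟨hw, heq ▸ Finset.coe_subset.2 hT'⟩

theorem cumD_eq_cumA (nn : Fin r → ℕ) (T : Finset ℕ) (hT : ∀ x ∈ T, x ≤ ∑ j, nn j) :
    cumD nn T = cumA nn T := by
  classical
  have hlen : ∀ w ∈ WF nn, w.length = ∑ j, nn j := fun w hw =>
    length_of_counts nn w ((mem_WF nn w).1 hw)
  have hmemphi : ∀ w ∈ WF nn, phi (T.sort (· ≤ ·)) w ∈ WF nn := by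
    intro w hw
    rw [mem_WF]
    intro j
    rw [(phi_perm (T.sort (· ≤ ·)) w).count_eq]
    exact (mem_WF nn w).1 hw j
  have hbnd : ∀ w ∈ WF nn, ∀ x ∈ T, x ≤ w.length := by
    intro w hw x hx; rw [hlen w hw]; exact hT x hx
  rw [cumD, cumA]
  refine Finset.card_bij' (fun w _ => phi (T.sort (· ≤ ·)) w)
    (fun w _ => phi (T.sort (· ≤ ·)) w) ?_ ?_ ?_ ?_
  · intro w hw
    rw [Finset.mem_filter] at hw ⊢
    exact ⟨hmemphi w hw.1, asc_phi T w (hbnd w hw.1) hw.2⟩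
  · intro w hw
    rw [Finset.mem_filter] at hw ⊢
    exact ⟨hmemphi w hw.1, des_phi T w (hbnd w hw.1) hw.2⟩
  · intro w hw
    exact phi_phi T w (hbnd w (Finset.mem_filter.1 hw).1)
  · intro w hw
    exact phi_phi T w (hbnd w (Finset.mem_filter.1 hw).1)

theorem cntD_eq_cntA (nn : Fin r → ℕ) :
    ∀ T : Finset ℕ, (∀ x ∈ T, x ≤ ∑ j, nn j) → cntD nn T = cntA nn T := by
  intro T
  induction T using Finset.strongInduction with
  | _ T ih =>
    intro hT
    have h1 := cumD_eq_sum nn T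
    have h2 := cumA_eq_sum nn T
    have h3 := cumD_eq_cumA nn T hT
    have hTm : T ∈ T.powerset := Finset.mem_powerset_self T
    rw [← Finset.sum_erase_add _ _ hTm] at h1 h2
    have herase : ∑ T' ∈ T.powerset.erase T, cntD nn T'
        = ∑ T' ∈ T.powerset.erase T, cntA nn T' := by
      refine Finset.sum_congr rfl fun T' hT' => ?_
      rw [Finset.mem_erase, Finset.mem_powerset] at hT'
      exact ih T' (lt_of_le_of_ne hT'.2 hT'.1) fun x hx => hT x (hT'.2 hx)
    omega

/-- Over the rearrangement class `R(n₁, …, n_r)` of words on the totally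
ordered alphabet with `r` letters having exactly `nn j` occurrences of the
letter `j`, the set-valued statistics `DES` and `ASC` are equidistributed. -/
theorem stmt_5 (r : ℕ) (nn : Fin r → ℕ) (S : Set ℕ) :
    {w : List (Fin r) | (∀ j, w.count j = nn j) ∧ Word.DES w = S}.ncard
      = {w : List (Fin r) | (∀ j, w.count j = nn j) ∧ Word.ASC w = S}.ncard := by
  classical
  by_cases h : ∃ T : Finset ℕ, ↑T = S ∧ ∀ x ∈ T, x ≤ ∑ j, nn j
  · obtain ⟨T, rfl, hT⟩ := h
    have hD : {w : List (Fin r) | (∀ j, w.count j = nn j) ∧ Word.DES w = ↑T}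
        = ↑((WF nn).filter fun w => Word.DES w = ↑T) := by
      ext w
      simp only [Set.mem_setOf_eq, Finset.coe_filter, mem_WF]
    have hA : {w : List (Fin r) | (∀ j, w.count j = nn j) ∧ Word.ASC w = ↑T}
        = ↑((WF nn).filter fun w => Word.ASC w = ↑T) := by
      ext w
      simp only [Set.mem_setOf_eq, Finset.coe_filter, mem_WF]
    rw [hD, hA, Set.ncard_coe_finset, Set.ncard_coe_finset]
    exact cntD_eq_cntA nn T hT
  · have hempty : ∀ F : List (Fin r) → Set ℕ,
        (∀ (w : List (Fin r)) (i : ℕ), i ∈ F w → i < w.length) →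
        {w : List (Fin r) | (∀ j, w.count j = nn j) ∧ F w = S} = ∅ := by
      intro F hF
      rw [Set.eq_empty_iff_forall_notMem]
      rintro w ⟨hc, hFw⟩
      have hfin : S.Finite := by
        refine (Set.finite_Iio w.length).subset ?_
        rw [← hFw]
        exact fun i hi => Set.mem_Iio.2 (hF w i hi)
      refine h ⟨hfin.toFinset, hfin.coe_toFinset, fun x hx => ?_⟩
      have hx' : x ∈ F w := hFw ▸ hfin.mem_toFinset.1 hx
      have := hF w x hx'
      rw [length_of_counts nn w hc] at this
      omega
    rw [hempty Word.DES (fun w i hi => by obtain ⟨h', -⟩ := hi; exact h'),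
      hempty Word.ASC (fun w i hi => by obtain ⟨h', -⟩ := hi; exact h')]
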